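/- Let I ≥ 2 and J ≥ 1, let β > 0 and α_j > 0 for j = 1,…,J, let (θ_1,…,θ_I) and (π_{1,j},…,π_{I,j}) for each j be probability vectors with all components strictly positive, let W₀ > 0, w_{j,0} > 0, and w₀ᵃˡˡ = W₀ + Σ_j w_{j,0}. Fix any weights ω_1,…,ω_J > 0 and let (x*_1,…,x*_J) ∈ (ℝ^I)^J be any maximizer of Σ_{j=1}^J ω_j·( −(1/α_j)·Σ_{i=1}^I π_{i,j}·e^{−α_j x_{i,j}} ) subject to Σ_{i=1}^I θ_i·e^{−β·(w₀ᵃˡˡ − Σ_{j=1}^J x_{i,j})} ≤ e^{−β W₀}. Set y*_i = w₀ᵃˡˡ − Σ_{j=1}^J x*_{i,j} and define the price p*_i = θ_i·e^{−β y*_i} / Σ_{k=1}^I θ_k·e^{−β y*_k}. Then, with η_j = (1/α_j)/(Σ_{k=1}^J (1/α_k) + 1/β) and η = (1/β)/(Σ_{k=1}^J (1/α_k) + 1/β), one has p*_i = θ_i^η·Π_{j=1}^J π_{i,j}^{η_j} / Σ_{k=1}^I ( θ_k^η·Π_{j=1}^J π_{k,j}^{η_j} ) for every i; in particular the price is independent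 of the choice of the weights ω. -/

import Mathlib

/-- In an exponential-utility market, the limiting price is the weighted
geometric mean of all participants' beliefs, independently of the Pareto weights. -/
theorem stmt_7 (I J : ℕ) (hI : 2 ≤ I) (hJ : 1 ≤ J)
    (β : ℝ) (hβ : 0 < β) (αv : Fin J → ℝ) (hα : ∀ j, 0 < αv j)
    (θ : Fin I → ℝ) (hθ : ∀ i, 0 < θ i) (hθs : ∑ i, θ i = 1)
    (π : Fin J → Fin I → ℝ) (hπ : ∀ j i, 0 < π j i) (hπs : ∀ j, ∑ i, π j i = 1)
    (W0 : ℝ) (hW0 : 0 < W0) (w0 : Fin J → ℝ) (hw0 : ∀ j, 0 < w0 j)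
    (ω : Fin J → ℝ) (hω : ∀ j, 0 < ω j)
    (xstar : Fin J → Fin I → ℝ)
    -- `xstar` is feasible for the Pareto problem
    (hfeas : ∑ i, θ i * Real.exp (-(β * ((W0 + ∑ j, w0 j) - ∑ j, xstar j i))) ≤
      Real.exp (-(β * W0)))
    -- `xstar` maximizes the `ω`-weighted sum of the traders' utilities
    (hopt : ∀ x : Fin J → Fin I → ℝ,
      (∑ i, θ i * Real.exp (-(β * ((W0 + ∑ j, w0 j) - ∑ j, x j i))) ≤
        Real.exp (-(β * W0))) →
      (∑ j, ω j * (-(1 / αv j) * ∑ i, π j i * Real.exp (-(αv j * x j i)))) ≤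
      (∑ j, ω j * (-(1 / αv j) * ∑ i, π j i * Real.exp (-(αv j * xstar j i))))) :
    ∀ i, (θ i * Real.exp (-(β * ((W0 + ∑ j, w0 j) - ∑ j, xstar j i)))) /
        (∑ k, θ k * Real.exp (-(β * ((W0 + ∑ j, w0 j) - ∑ j, xstar j k)))) =
      (θ i ^ ((1 / β) / ((∑ j, 1 / αv j) + 1 / β)) *
          ∏ j, π j i ^ ((1 / αv j) / ((∑ k, 1 / αv k) + 1 / β))) /
      (∑ k, θ k ^ ((1 / β) / ((∑ j, 1 / αv j) + 1 / β)) *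
          ∏ j, π j k ^ ((1 / αv j) / ((∑ l, 1 / αv l) + 1 / β))) := by
  have hJne : Nonempty (Fin J) := ⟨⟨0, hJ⟩⟩
  have hIne : Nonempty (Fin I) := ⟨⟨0, by omega⟩⟩
  set W : ℝ := W0 + ∑ j, w0 j with hWdef
  set A : ℝ := ∑ j, 1 / αv j with hAdef
  have hA : 0 < A := Finset.sum_pos (fun j _ => by have := hα j; positivity)
    ⟨⟨0, hJ⟩, Finset.mem_univ _⟩
  set T : ℝ := A + 1 / β with hTdef
  have hT : 0 < T := by positivity
  set η : ℝ := (1 / β) / T with hηdef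
  set ηf : Fin J → ℝ := fun j => (1 / αv j) / T with hηfdef
  set N : Fin I → ℝ := fun i => θ i ^ η * ∏ j, π j i ^ ηf j with hNdef
  have hNpos : ∀ i, 0 < N i := fun i => mul_pos (Real.rpow_pos_of_pos (hθ i) _)
    (Finset.prod_pos (fun j _ => Real.rpow_pos_of_pos (hπ j i) _))
  set Z : ℝ := ∑ k, N k with hZdef
  have hZpos : 0 < Z := Finset.sum_pos (fun k _ => hNpos k) Finset.univ_nonempty
  set S : ℝ := Real.exp (-(β * W0)) with hSdef
  have hSpos : 0 < S := Real.exp_pos _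
  set th : Fin I → ℝ := fun i => S * N i / Z with hthdef
  have hthpos : ∀ i, 0 < th i := fun i => by
    have := hNpos i; rw [hthdef]; positivity
  have hthi : ∀ i, th i = S * N i / Z := fun i => by rw [hthdef]
  have hths : ∑ i, th i = S := by
    rw [hthdef]
    rw [← Finset.sum_div, ← Finset.mul_sum, ← hZdef]
    field_simp
  -- logarithm of th
  have hlogth : ∀ i, Real.log (th i) =
      Real.log S + η * Real.log (θ i) + (∑ j, ηf j * Real.log (π j i)) - Real.log Z := by
    intro i
    have e1 : Real.log (N i) = η * Real.log (θ i) + ∑ j, ηf j * Real.log (π j i) := by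
      show Real.log (θ i ^ η * ∏ j, π j i ^ ηf j) = _
      rw [Real.log_mul (Real.rpow_pos_of_pos (hθ i) _).ne'
        (Finset.prod_pos (fun j _ => Real.rpow_pos_of_pos (hπ j i) _)).ne',
        Real.log_rpow (hθ i),
        Real.log_prod (fun j _ => (Real.rpow_pos_of_pos (hπ j i) _).ne')]
      congr 1
      exact Finset.sum_congr rfl fun j _ => Real.log_rpow (hπ j i) _
    show Real.log (S * N i / Z) = _
    rw [Real.log_div (mul_pos hSpos (hNpos i)).ne' hZpos.ne',
      Real.log_mul hSpos.ne' (hNpos i).ne', e1]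
    ring
  -- the multiplier
  set c : ℝ := T * (Real.log Z - Real.log S) with hcdef
  set L : ℝ := ((∑ j, (1 / αv j) * Real.log (ω j)) - W + c) / A with hLdef
  set xh : Fin J → Fin I → ℝ :=
    fun j i => (1 / αv j) * (Real.log (ω j) + Real.log (π j i) - L - Real.log (th i))
    with hxhdef
  clear_value W A T η ηf N Z S th c L xh
  -- KKT identity 1
  have K1 : ∀ j i, Real.exp (-(αv j * xh j i)) = Real.exp L * th i / (ω j * π j i) := by
    intro j i
    have h0 : αv j * xh j i =
        Real.log (ω j) + Real.log (π j i) - L - Real.log (th i) := by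
      simp only [hxhdef]
      rw [← mul_assoc, mul_one_div, div_self (hα j).ne', one_mul]
    have h1 : -(αv j * xh j i) =
        (L + Real.log (th i)) - (Real.log (ω j) + Real.log (π j i)) := by
      rw [h0]; ring
    rw [h1, Real.exp_sub, Real.exp_add, Real.exp_add, Real.exp_log (hthpos i),
      Real.exp_log (hω j), Real.exp_log (hπ j i)]
  -- KKT identity 2
  have K2 : ∀ i, Real.exp (-(β * (W - ∑ j, xh j i))) = th i / θ i := by
    intro i
    have hP : ∑ j, (1 / αv j) * Real.log (π j i)
        = T * (∑ j, ηf j * Real.log (π j i)) := by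
      rw [Finset.mul_sum]
      refine Finset.sum_congr rfl fun j _ => ?_
      simp only [hηfdef]
      have hTT : T * (1 / αv j / T) = 1 / αv j := by
        rw [mul_comm]; exact div_mul_cancel₀ _ hT.ne'
      rw [← mul_assoc, hTT]
    have expand : ∀ j, xh j i = (1 / αv j) * Real.log (ω j)
        + (1 / αv j) * Real.log (π j i) - (1 / αv j) * (L + Real.log (th i)) := by
      intro j
      simp only [hxhdef]
      ring
    have hsum : ∑ j, xh j i = (∑ j, (1 / αv j) * Real.log (ω j))
        + T * (∑ j, ηf j * Real.log (π j i)) - A * (L + Real.log (th i)) := by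
      rw [Finset.sum_congr rfl fun j _ => expand j, Finset.sum_sub_distrib,
        Finset.sum_add_distrib, hP, ← Finset.sum_mul, ← hAdef]
    have hAL : A * L = (∑ j, (1 / αv j) * Real.log (ω j)) - W + c := by
      rw [hLdef]; field_simp
    have hsum2 : ∑ j, xh j i = W - c
        + T * (∑ j, ηf j * Real.log (π j i)) - A * Real.log (th i) := by
      linear_combination hsum - hAL
    have hE := hlogth i
    have hβT : β * T = β * A + 1 := by
      rw [hTdef]; field_simp
    have hβTη : β * T * η = 1 := by
      rw [hηdef]; field_simp
    suffices h : -(β * (W - ∑ j, xh j i)) = Real.log (th i) - Real.log (θ i) by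
      rw [h, Real.exp_sub, Real.exp_log (hthpos i), Real.exp_log (hθ i)]
    rw [hsum2]
    linear_combination (-β) * hcdef + (-(β * T)) * hE
      + Real.log (th i) * hβT - Real.log (θ i) * hβTη
  -- feasibility of xh, with equality
  have hfeas2 : ∑ i, θ i * Real.exp (-(β * (W - ∑ j, xh j i))) = S := by
    have h : ∀ i, θ i * Real.exp (-(β * (W - ∑ j, xh j i))) = th i := by
      intro i; rw [K2 i, mul_comm, div_mul_cancel₀ _ (hθ i).ne']
    rw [Finset.sum_congr rfl fun i _ => h i, hths]
  -- the deviations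
  set D : Fin I → ℝ := fun i => ∑ j, (xstar j i - xh j i) with hDdef
  clear_value D
  have htsr : ∀ i, θ i * Real.exp (-(β * (W - ∑ j, xstar j i))) =
      th i * Real.exp (β * D i) := by
    intro i
    have h1 : ∑ j, xstar j i = (∑ j, xh j i) + D i := by
      simp only [hDdef]
      rw [← Finset.sum_add_distrib]
      exact Finset.sum_congr rfl fun j _ => by ring
    have h2 : -(β * (W - ∑ j, xstar j i)) = -(β * (W - ∑ j, xh j i)) + β * D i := by
      rw [h1]; ring
    rw [h2, Real.exp_add, K2 i, ← mul_assoc, mul_div_cancel₀ _ (hθ i).ne']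
  -- constraint side
  have hG : ∑ i, th i * (β * D i) ≤ 0 := by
    have h1 : ∑ i, th i * Real.exp (β * D i) ≤ S := by
      calc ∑ i, th i * Real.exp (β * D i)
          = ∑ i, θ i * Real.exp (-(β * (W - ∑ j, xstar j i))) :=
            Finset.sum_congr rfl fun i _ => (htsr i).symm
        _ ≤ S := hfeas
    have h2 : ∀ i, th i * (1 + β * D i) ≤ th i * Real.exp (β * D i) := fun i =>
      mul_le_mul_of_nonneg_left
        (by have := Real.add_one_le_exp (β * D i); linarith) (hthpos i).le
    have h3 : ∑ i, th i * (1 + β * D i) ≤ S :=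
      le_trans (Finset.sum_le_sum fun i _ => h2 i) h1
    have h4 : ∑ i, th i * (1 + β * D i) = S + ∑ i, th i * (β * D i) := by
      rw [← hths, ← Finset.sum_add_distrib]
      exact Finset.sum_congr rfl fun i _ => by ring
    linarith
  have hG' : ∑ i, th i * D i ≤ 0 := by
    have h1 : ∑ i, th i * (β * D i) = β * ∑ i, th i * D i := by
      rw [Finset.mul_sum]; exact Finset.sum_congr rfl fun i _ => by ring
    nlinarith
  -- objective side
  have hQ : ∑ j, ∑ i, (th i / αv j) * Real.exp (-(αv j * (xstar j i - xh j i))) ≤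
      ∑ j, ∑ i, th i / αv j := by
    have h := hopt xh (le_of_eq hfeas2)
    have lhsj : ∀ j, ω j * (-(1 / αv j) * ∑ i, π j i * Real.exp (-(αv j * xh j i))) =
        -Real.exp L * ∑ i, th i / αv j := by
      intro j
      have hb : ∀ i, π j i * Real.exp (-(αv j * xh j i)) = Real.exp L * th i / ω j := by
        intro i
        rw [K1 j i, ← div_div, mul_div_cancel₀ _ (hπ j i).ne']
      rw [Finset.sum_congr rfl fun i _ => hb i]
      have e1 : ∑ i, Real.exp L * th i / ω j = Real.exp L * (∑ i, th i) / ω j := by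
        rw [← Finset.sum_div, ← Finset.mul_sum]
      have e2 : ∑ i, th i / αv j = (∑ i, th i) / αv j := by
        rw [← Finset.sum_div]
      rw [e1, e2]
      field_simp [(hω j).ne', (hα j).ne']
    have rhsj : ∀ j, ω j * (-(1 / αv j) * ∑ i, π j i * Real.exp (-(αv j * xstar j i))) =
        -Real.exp L * ∑ i, (th i / αv j) * Real.exp (-(αv j * (xstar j i - xh j i))) := by
      intro j
      have hb : ∀ i, π j i * Real.exp (-(αv j * xstar j i)) =
          Real.exp L * (th i * Real.exp (-(αv j * (xstar j i - xh j i)))) / ω j := by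
        intro i
        have e0 : -(αv j * xstar j i) =
            -(αv j * xh j i) + -(αv j * (xstar j i - xh j i)) := by ring
        rw [e0, Real.exp_add, K1 j i, div_mul_eq_mul_div, ← div_div,
          mul_div_cancel₀ _ (hπ j i).ne']
        ring
      rw [Finset.sum_congr rfl fun i _ => hb i]
      have e1 : ∑ i, Real.exp L * (th i * Real.exp (-(αv j * (xstar j i - xh j i)))) / ω j =
          Real.exp L * (∑ i, th i * Real.exp (-(αv j * (xstar j i - xh j i)))) / ω j := by
        rw [← Finset.sum_div, ← Finset.mul_sum]
      have e2 : ∑ i, (th i / αv j) * Real.exp (-(αv j * (xstar j i - xh j i))) =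
          (∑ i, th i * Real.exp (-(αv j * (xstar j i - xh j i)))) / αv j := by
        rw [Finset.sum_div]
        exact Finset.sum_congr rfl fun i _ => by ring
      rw [e1, e2]
      field_simp [(hω j).ne', (hα j).ne']
    rw [Finset.sum_congr rfl fun j _ => lhsj j,
      Finset.sum_congr rfl fun j _ => rhsj j, ← Finset.mul_sum, ← Finset.mul_sum] at h
    have hexp : (0:ℝ) < Real.exp L := Real.exp_pos L
    nlinarith
  -- every deviation vanishes
  have key : ∀ j i, xstar j i = xh j i := by
    set g : Fin J → Fin I → ℝ := fun j i =>
      (th i / αv j) * Real.exp (-(αv j * (xstar j i - xh j i)))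
        - th i / αv j + th i * (xstar j i - xh j i) with hgdef
    clear_value g
    have hrepr : ∀ j i, g j i = (th i / αv j) *
        (Real.exp (-(αv j * (xstar j i - xh j i))) - 1
          - (-(αv j * (xstar j i - xh j i)))) := by
      intro j i
      have hcancel : th i / αv j * (αv j * (xstar j i - xh j i))
          = th i * (xstar j i - xh j i) := by
        rw [div_mul_eq_mul_div, mul_left_comm, mul_div_cancel_left₀ _ (hα j).ne']
      simp only [hgdef]
      linear_combination -hcancel
    have hg0 : ∀ j i, 0 ≤ g j i := by
      intro j i
      rw [hrepr j i]
      have h1 := Real.add_one_le_exp (-(αv j * (xstar j i - xh j i)))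
      have h2 : 0 < th i / αv j := div_pos (hthpos i) (hα j)
      have h3 : (0:ℝ) ≤ Real.exp (-(αv j * (xstar j i - xh j i))) - 1
          - (-(αv j * (xstar j i - xh j i))) := by linarith
      exact mul_nonneg h2.le h3
    have hswap : ∑ j, ∑ i, th i * (xstar j i - xh j i) = ∑ i, th i * D i := by
      rw [Finset.sum_comm]
      refine Finset.sum_congr rfl fun i _ => ?_
      simp only [hDdef]
      rw [Finset.mul_sum]
    have hsplit : ∑ j, ∑ i, g j i =
        (∑ j, ∑ i, (th i / αv j) * Real.exp (-(αv j * (xstar j i - xh j i))))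
        - (∑ j, ∑ i, th i / αv j) + (∑ i, th i * D i) := by
      rw [← hswap, ← Finset.sum_sub_distrib, ← Finset.sum_add_distrib]
      refine Finset.sum_congr rfl fun j _ => ?_
      rw [← Finset.sum_sub_distrib, ← Finset.sum_add_distrib]
      simp only [hgdef]
    have hsum0 : ∑ j, ∑ i, g j i ≤ 0 := by
      rw [hsplit]; linarith
    have h1 : ∑ j, ∑ i, g j i = 0 :=
      le_antisymm hsum0 (Finset.sum_nonneg fun j _ => Finset.sum_nonneg fun i _ => hg0 j i)
    have h2 := (Finset.sum_eq_zero_iff_of_nonneg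
      (fun j _ => Finset.sum_nonneg fun i _ => hg0 j i)).mp h1
    intro j i
    have h3 := (Finset.sum_eq_zero_iff_of_nonneg (fun i _ => (hg0 j i))).mp
      (h2 j (Finset.mem_univ j)) i (Finset.mem_univ i)
    rw [hrepr j i] at h3
    have h4 : Real.exp (-(αv j * (xstar j i - xh j i))) - 1
        - (-(αv j * (xstar j i - xh j i))) = 0 := by
      have h2' : th i / αv j ≠ 0 := (div_pos (hthpos i) (hα j)).ne'
      exact (mul_eq_zero.mp h3).resolve_left h2'
    by_contra hne
    have hu : -(αv j * (xstar j i - xh j i)) ≠ 0 := by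
      have h5 : xstar j i - xh j i ≠ 0 := sub_ne_zero_of_ne hne
      have := (hα j).ne'
      intro hcon
      apply h5
      have : αv j * (xstar j i - xh j i) = 0 := by linarith [neg_eq_zero.mp hcon]
      exact (mul_eq_zero.mp this).resolve_left (hα j).ne'
    have := Real.add_one_lt_exp hu
    linarith
  -- conclusion
  intro i
  have hsx : ∀ i, ∑ j, xstar j i = ∑ j, xh j i := fun i =>
    Finset.sum_congr rfl fun j _ => key j i
  have hpt : ∀ i, θ i * Real.exp (-(β * (W - ∑ j, xstar j i))) = th i := by
    intro i; rw [hsx i, K2 i, mul_comm, div_mul_cancel₀ _ (hθ i).ne']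
  rw [Finset.sum_congr rfl fun k _ => hpt k, hpt i, hths]
  have hNi2 : θ i ^ η * ∏ j, π j i ^ (1 / αv j / T) = N i := by
    rw [hNdef, hηfdef]
  rw [hNi2, hthi i]
  field_simp
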